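/- There exists δ > 0 such that every continuous linear equivalence F : ℓ¹₀ → ℓ¹ satisfies ‖F‖_op · ‖F⁻¹‖_op ≥ 1 + δ; that is, the Banach–Mazur distance between ℓ¹₀ = ℓ¹₀ℕ and ℓ¹ = ℓ¹ℕ is strictly greater than 1. -/

import Mathlib

open scoped ENNReal

/-- Any element of `ℓ¹Q` is summable. -/
theorem l1summable {Q : Type*} (f : lp (fun _ : Q => ℝ) 1) : Summable fun q : Q => f q := by
  have h := (lp.memℓp f).summable (p := 1) (by norm_num)
  simp only [ENNReal.toReal_one, Real.rpow_one] at h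
  exact h.of_norm

/-- `ℓ¹₀Q`, the subspace of zero-sum elements of `ℓ¹Q`. -/
noncomputable def l1zero (Q : Type*) : Submodule ℝ (lp (fun _ : Q => ℝ) 1) where
  carrier := {f | ∑' q : Q, f q = 0}
  add_mem' := by
    intro f g hf hg
    simp only [Set.mem_setOf_eq] at *
    have hpt : ∀ q : Q, (f + g) q = f q + g q := fun q => by
      rw [lp.coeFn_add]; rfl
    rw [tsum_congr hpt, Summable.tsum_add (l1summable f) (l1summable g), hf, hg, add_zero]
  zero_mem' := by
    simp only [Set.mem_setOf_eq]
    have hpt : ∀ q : Q, (0 : lp (fun _ : Q => ℝ) 1) q = 0 := fun q => by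
      rw [lp.coeFn_zero]; rfl
    rw [tsum_congr hpt, tsum_zero]
  smul_mem' := by
    intro c f hf
    simp only [Set.mem_setOf_eq] at *
    have hpt : ∀ q : Q, (c • f) q = c * f q := fun q => by
      rw [lp.coeFn_smul]; rfl
    rw [tsum_congr hpt, tsum_mul_left, hf, mul_zero]

/-! ### Auxiliary lemmas -/

lemma bm_min_eq (u v : ℝ) : min |u| |v| = |u| + |v| - (|u + v| + |u - v|) / 2 := by
  rcases min_cases |u| |v| with ⟨h, h'⟩ | ⟨h, h'⟩ <;>
  rcases abs_cases (u + v) with ⟨h1, _⟩ | ⟨h1, _⟩ <;>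
  rcases abs_cases (u - v) with ⟨h2, _⟩ | ⟨h2, _⟩ <;>
  rcases abs_cases u with ⟨h3, _⟩ | ⟨h3, _⟩ <;>
  rcases abs_cases v with ⟨h4, _⟩ | ⟨h4, _⟩ <;>
  linarith

lemma bm_norm_eq (f : lp (fun _ : ℕ => ℝ) 1) : ‖f‖ = ∑' q, |f q| := by
  have h := lp.norm_eq_tsum_rpow (p := 1) (by norm_num) f
  simpa [Real.norm_eq_abs] using h

lemma bm_summable_abs (f : lp (fun _ : ℕ => ℝ) 1) : Summable fun q => |f q| :=
  (l1summable f).abs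

lemma bm_overlap (x y : lp (fun _ : ℕ => ℝ) 1) :
    min |x 0| |y 0| ≤ ‖x‖ + ‖y‖ - (‖x + y‖ + ‖x - y‖) / 2 := by
  have hpt : ∀ q, |(x + y) q| + |(x - y) q| = |x q + y q| + |x q - y q| := by
    intro q
    rw [lp.coeFn_add, lp.coeFn_sub]; rfl
  have hx := bm_summable_abs x
  have hy := bm_summable_abs y
  have hxy := bm_summable_abs (x + y)
  have hxy' := bm_summable_abs (x - y)
  have hmin : Summable fun q => min |x q| |y q| :=
    Summable.of_nonneg_of_le (fun q => le_min (abs_nonneg _) (abs_nonneg _))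
      (fun q => min_le_left _ _) hx
  have key : ∑' q, min |x q| |y q| = ‖x‖ + ‖y‖ - (‖x + y‖ + ‖x - y‖) / 2 := by
    have h1 : ∀ q, min |x q| |y q| = (|x q| + |y q|) - (|(x + y) q| + |(x - y) q|) / 2 := by
      intro q; rw [hpt q]; exact bm_min_eq _ _
    rw [tsum_congr h1, Summable.tsum_sub (hx.add hy) (((hxy.add hxy')).div_const 2)]
    rw [Summable.tsum_add hx hy, tsum_div_const, Summable.tsum_add hxy hxy']
    rw [bm_norm_eq x, bm_norm_eq y, bm_norm_eq (x + y), bm_norm_eq (x - y)]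
  calc min |x 0| |y 0| ≤ ∑' q, min |x q| |y q| :=
        Summable.le_tsum hmin 0 (fun q _ => le_min (abs_nonneg _) (abs_nonneg _))
    _ = _ := key

lemma bm_sum_zero_bound (w : lp (fun _ : ℕ => ℝ) 1) (hw : ∑' q, w q = 0) :
    |w 0| + |w 1| + |w 2| + |w 0 + w 1 + w 2| ≤ ‖w‖ := by
  have hs := l1summable w
  have ha := bm_summable_abs w
  have h1 := Summable.sum_add_tsum_nat_add (f := fun q => w q) 3 hs
  have h2 := Summable.sum_add_tsum_nat_add (f := fun q => |w q|) 3 ha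
  have h3 : |∑' i, w (i + 3)| ≤ ∑' i, |w (i + 3)| := by
    simpa [Real.norm_eq_abs] using
      norm_tsum_le_tsum_norm (f := fun i => w (i + 3))
        (by simpa [Real.norm_eq_abs, Function.comp_def] using (ha.comp_injective (add_left_injective 3)))
  simp [Finset.sum_range_succ] at h1 h2
  rw [hw] at h1
  rw [← bm_norm_eq w] at h2
  have h4 : |∑' i, w (i + 3)| = |w 0 + w 1 + w 2| := by
    rw [show (∑' i, w (i + 3)) = -(w 0 + w 1 + w 2) by linarith, abs_neg]
  linarith [abs_nonneg (w 0 + w 1 + w 2), h3, h4.le]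

noncomputable def bm_eval (q : ℕ) : lp (fun _ : ℕ => ℝ) 1 →L[ℝ] ℝ :=
  LinearMap.mkContinuous
    { toFun := fun f => f q
      map_add' := fun f g => by
        simp only []; rw [show ⇑(f + g) = ⇑f + ⇑g from lp.coeFn_add f g]; rfl
      map_smul' := fun c f => by
        simp only []; rw [show ⇑(c • f) = c • ⇑f from lp.coeFn_smul c f]; rfl }
    1 (fun f => by
      simpa [Real.norm_eq_abs] using lp.norm_apply_le_norm (p := 1) one_ne_zero f q)

@[simp] lemma bm_eval_apply (q : ℕ) (f : lp (fun _ : ℕ => ℝ) 1) : bm_eval q f = f q := rfl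

lemma bm_hasSum (T : lp (fun _ : ℕ => ℝ) 1 →L[ℝ] ℝ) (y : lp (fun _ : ℕ => ℝ) 1) :
    HasSum (fun n => y n * T (lp.single 1 n 1)) (T y) := by
  have h := lp.hasSum_single (E := fun _ : ℕ => ℝ) (p := 1) (by norm_num) y
  have h2 := h.mapL T
  have heq : ∀ n, T (lp.single 1 n (y n)) = y n * T (lp.single 1 n 1) := by
    intro n
    have h3 : lp.single (E := fun _ : ℕ => ℝ) 1 n (y n) = y n • lp.single 1 n (1 : ℝ) := by
      rw [← lp.single_smul]; norm_num
    rw [h3, map_smul, smul_eq_mul]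
  simpa [heq] using h2

noncomputable def bm_pair (i j : ℕ) : lp (fun _ : ℕ => ℝ) 1 :=
  lp.single 1 i (1 / 2 : ℝ) + lp.single 1 j (-(1 / 2) : ℝ)

lemma bm_pair_apply (i j q : ℕ) (hij : i ≠ j) :
    bm_pair i j q = if q = i then (1 / 2 : ℝ) else if q = j then -(1 / 2) else 0 := by
  have h : bm_pair i j q = lp.single (E := fun _ : ℕ => ℝ) 1 i (1/2 : ℝ) q +
      lp.single (E := fun _ : ℕ => ℝ) 1 j (-(1/2) : ℝ) q := by
    rw [show ⇑(bm_pair i j) = _ from lp.coeFn_add _ _]; rfl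
  rw [h]
  rcases eq_or_ne q i with rfl | hqi
  · rw [lp.single_apply_self, lp.single_apply_ne _ _ _ (by exact hij), if_pos rfl]; ring
  · rw [lp.single_apply_ne _ _ _ hqi, if_neg hqi]
    rcases eq_or_ne q j with rfl | hqj
    · rw [lp.single_apply_self, if_pos rfl]; ring
    · rw [lp.single_apply_ne _ _ _ hqj, if_neg hqj]; ring

lemma bm_pair_tsum (i j : ℕ) (hij : i ≠ j) : ∑' q, bm_pair i j q = 0 := by
  have hz : ∀ q ∉ ({i, j} : Finset ℕ), bm_pair i j q = 0 := by
    intro q hq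
    simp only [Finset.mem_insert, Finset.mem_singleton, not_or] at hq
    rw [bm_pair_apply i j q hij, if_neg hq.1, if_neg hq.2]
  rw [tsum_eq_sum hz, Finset.sum_pair hij, bm_pair_apply i j i hij,
    bm_pair_apply i j j hij, if_pos rfl, if_neg (Ne.symm hij), if_pos rfl]
  ring

lemma bm_pair_norm (i j : ℕ) (hij : i ≠ j) : ‖bm_pair i j‖ = 1 := by
  rw [bm_norm_eq]
  have hz : ∀ q ∉ ({i, j} : Finset ℕ), |bm_pair i j q| = 0 := by
    intro q hq
    simp only [Finset.mem_insert, Finset.mem_singleton, not_or] at hq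
    rw [bm_pair_apply i j q hij, if_neg hq.1, if_neg hq.2, abs_zero]
  rw [tsum_eq_sum hz, Finset.sum_pair hij, bm_pair_apply i j i hij,
    bm_pair_apply i j j hij, if_pos rfl, if_neg (Ne.symm hij), if_pos rfl]
  rw [abs_of_pos (by norm_num : (0:ℝ) < 1/2), abs_neg,
    abs_of_pos (by norm_num : (0:ℝ) < 1/2)]
  norm_num

lemma bm_norm_single_add (n m : ℕ) (hnm : n ≠ m) :
    ‖lp.single (E := fun _ : ℕ => ℝ) 1 n (1 : ℝ) + lp.single 1 m (1 : ℝ)‖ = 2 := by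
  have h := lp.norm_sum_single (E := fun _ : ℕ => ℝ) (p := 1) (by norm_num)
    (fun _ : ℕ => (1 : ℝ)) {n, m}
  rw [Finset.sum_pair hnm] at h
  simp [Finset.card_pair hnm] at h
  exact_mod_cast h

lemma bm_norm_single_sub (n m : ℕ) (hnm : n ≠ m) :
    ‖lp.single (E := fun _ : ℕ => ℝ) 1 n (1 : ℝ) - lp.single 1 m (1 : ℝ)‖ = 2 := by
  have h := lp.norm_sum_single (E := fun _ : ℕ => ℝ) (p := 1) (by norm_num)
    (fun i : ℕ => if i = n then (1 : ℝ) else -1) {n, m}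
  rw [Finset.sum_pair hnm] at h
  have h2 : lp.single (E := fun _ : ℕ => ℝ) 1 n (if n = n then (1:ℝ) else -1) +
      lp.single 1 m (if m = n then (1:ℝ) else -1) =
      lp.single (E := fun _ : ℕ => ℝ) 1 n (1 : ℝ) - lp.single 1 m (1 : ℝ) := by
    rw [if_pos rfl, if_neg hnm.symm, show lp.single (E := fun _ : ℕ => ℝ) 1 m (-1:ℝ) =
      -lp.single 1 m (1:ℝ) from lp.single_neg 1 m 1, sub_eq_add_neg]
  rw [h2, Finset.sum_pair hnm] at h
  simp [hnm.symm] at h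
  rw [h]
  norm_num

lemma bm_real (x y z N2 : ℝ) (hkey : |x| + |y| + |z| + |x + y + z| ≤ N2)
    (hd : 5/6 * N2 < |x - y|) : N2/3 < |x| ∧ N2/3 < |y| ∧ |z| ≤ N2/6 := by
  have h1 : |x - y| ≤ |x| + |y| := abs_sub x y
  have h2 : |x + y| ≤ |x + y + z| + |z| := by
    calc |x + y| = |(x + y + z) - z| := by ring_nf
      _ ≤ |x + y + z| + |z| := abs_sub _ _
  have h3 : |x - y| ≤ 2 * |x| + |x + y| := by
    calc |x - y| = |2 * x - (x + y)| := by ring_nf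
      _ ≤ |2 * x| + |x + y| := abs_sub _ _
      _ = 2 * |x| + |x + y| := by rw [abs_mul, abs_two]
  have h4 : |x - y| ≤ |x + y| + 2 * |y| := by
    calc |x - y| = |(x + y) - 2 * y| := by ring_nf
      _ ≤ |x + y| + |2 * y| := abs_sub _ _
      _ = |x + y| + 2 * |y| := by rw [abs_mul, abs_two]
  have h5 := abs_nonneg (x + y + z)
  have h6 := abs_nonneg z
  exact ⟨by linarith, by linarith, by linarith⟩

set_option maxHeartbeats 2000000 in
/-- The Banach–Mazur distance between `ℓ¹₀ = ℓ¹₀ℕ` and `ℓ¹ = ℓ¹ℕ` is strictly greater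
than `1`: there is `δ > 0` such that every continuous linear equivalence `F : ℓ¹₀ → ℓ¹`
satisfies `‖F‖ ⬝ ‖F⁻¹‖ ≥ 1 + δ`. -/
theorem banachMazur_l1zero_l1_gt_one :
    ∃ δ : ℝ, 0 < δ ∧
      ∀ F : ↥(l1zero ℕ) ≃L[ℝ] lp (fun _ : ℕ => ℝ) 1,
        1 + δ ≤ ‖(F.toContinuousLinearMap :
            ↥(l1zero ℕ) →L[ℝ] lp (fun _ : ℕ => ℝ) 1)‖ *
          ‖(F.symm.toContinuousLinearMap :
            lp (fun _ : ℕ => ℝ) 1 →L[ℝ] ↥(l1zero ℕ))‖ := by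
  refine ⟨1/8, by norm_num, ?_⟩
  intro F
  by_contra hcon
  push_neg at hcon
  set T : ↥(l1zero ℕ) →L[ℝ] lp (fun _ : ℕ => ℝ) 1 := F.toContinuousLinearMap with hT
  set S : lp (fun _ : ℕ => ℝ) 1 →L[ℝ] ↥(l1zero ℕ) := F.symm.toContinuousLinearMap with hS
  set N1 : ℝ := ‖T‖ with hN1def
  set N2 : ℝ := ‖S‖ with hN2def
  have hN1 : (0:ℝ) ≤ N1 := by rw [hN1def]; exact norm_nonneg T
  have hN2 : (0:ℝ) ≤ N2 := by rw [hN2def]; exact norm_nonneg S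
  set e : ℕ → lp (fun _ : ℕ => ℝ) 1 := fun n => lp.single 1 n (1:ℝ) with he
  have hnorme : ∀ n, ‖e n‖ = 1 := by
    intro n
    have h := lp.norm_single (E := fun _ : ℕ => ℝ) (p := 1) (by norm_num) n (1:ℝ)
    simpa [he] using h
  set v : ℕ → lp (fun _ : ℕ => ℝ) 1 := fun n => ((F.symm (e n) : ↥(l1zero ℕ)) :
    lp (fun _ : ℕ => ℝ) 1) with hv
  have hvmem : ∀ n, ∑' q, v n q = 0 := fun n => (F.symm (e n)).2
  have hvnorm : ∀ n, ‖v n‖ ≤ N2 := by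
    intro n
    have h1 : ‖S (e n)‖ ≤ N2 * ‖e n‖ := S.le_opNorm _
    rw [hnorme n, mul_one] at h1
    calc ‖v n‖ = ‖S (e n)‖ := by
          rw [hv]; simp only [hS, ContinuousLinearEquiv.coe_coe, Submodule.coe_norm]
      _ ≤ N2 := h1
  have hlow : ∀ y : lp (fun _ : ℕ => ℝ) 1,
      ‖y‖ ≤ N1 * ‖((F.symm y : ↥(l1zero ℕ)) : lp (fun _ : ℕ => ℝ) 1)‖ := by
    intro y
    have h1 : T (F.symm y) = y := by
      simp [hT, ContinuousLinearEquiv.coe_coe]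
    calc ‖y‖ = ‖T (F.symm y)‖ := by rw [h1]
      _ ≤ N1 * ‖F.symm y‖ := T.le_opNorm _
      _ = N1 * ‖((F.symm y : ↥(l1zero ℕ)) : lp (fun _ : ℕ => ℝ) 1)‖ := by
          rw [Submodule.coe_norm]
  have hmem01 : bm_pair 0 1 ∈ l1zero ℕ := bm_pair_tsum 0 1 (by norm_num)
  have hmem02 : bm_pair 0 2 ∈ l1zero ℕ := bm_pair_tsum 0 2 (by norm_num)
  set U01 : ↥(l1zero ℕ) := ⟨bm_pair 0 1, hmem01⟩ with hU01
  set U02 : ↥(l1zero ℕ) := ⟨bm_pair 0 2, hmem02⟩ with hU02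
  set a : lp (fun _ : ℕ => ℝ) 1 := T U01 with ha
  set b : lp (fun _ : ℕ => ℝ) 1 := T U02 with hb
  have hanorm : ‖a‖ ≤ N1 := by
    have h1 : ‖T U01‖ ≤ N1 * ‖U01‖ := T.le_opNorm _
    have h2 : ‖U01‖ = 1 := by
      rw [Submodule.coe_norm]; exact bm_pair_norm 0 1 (by norm_num)
    rw [h2, mul_one] at h1; exact h1
  have hbnorm : ‖b‖ ≤ N1 := by
    have h1 : ‖T U02‖ ≤ N1 * ‖U02‖ := T.le_opNorm _
    have h2 : ‖U02‖ = 1 := by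
      rw [Submodule.coe_norm]; exact bm_pair_norm 0 2 (by norm_num)
    rw [h2, mul_one] at h1; exact h1
  have hcoord : ∀ (U : ↥(l1zero ℕ)) (q : ℕ),
      HasSum (fun n => (T U : lp (fun _ : ℕ => ℝ) 1) n * v n q)
        ((U : lp (fun _ : ℕ => ℝ) 1) q) := by
    intro U q
    set Φ : lp (fun _ : ℕ => ℝ) 1 →L[ℝ] ℝ :=
      (bm_eval q).comp (((l1zero ℕ).subtypeL).comp S) with hΦ
    have h1 := bm_hasSum Φ (T U)
    have h2 : ∀ n, Φ (e n) = v n q := by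
      intro n
      simp [hΦ, hS, hv, ContinuousLinearEquiv.coe_coe]
    have h3 : Φ (T U) = (U : lp (fun _ : ℕ => ℝ) 1) q := by
      simp [hΦ, hT, hS, ContinuousLinearEquiv.coe_coe]
    have h2' : ∀ n, Φ (lp.single 1 n 1) = v n q := h2
    simp only [h2', h3] at h1
    exact h1
  have hA : HasSum (fun n => a n * (v n 0 - v n 1)) 1 := by
    have h0 := hcoord U01 0
    have h1 := hcoord U01 1
    have e0 : ((U01 : lp (fun _ : ℕ => ℝ) 1)) 0 = (1/2 : ℝ) := by
      show bm_pair 0 1 0 = _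
      rw [bm_pair_apply 0 1 0 (by norm_num)]; norm_num
    have e1 : ((U01 : lp (fun _ : ℕ => ℝ) 1)) 1 = (-(1/2) : ℝ) := by
      show bm_pair 0 1 1 = _
      rw [bm_pair_apply 0 1 1 (by norm_num)]; norm_num
    rw [e0] at h0; rw [e1] at h1
    have h := h0.sub h1
    simp only [← mul_sub] at h
    norm_num at h
    exact h
  have hB : HasSum (fun n => b n * (v n 0 - v n 2)) 1 := by
    have h0 := hcoord U02 0
    have h1 := hcoord U02 2
    have e0 : ((U02 : lp (fun _ : ℕ => ℝ) 1)) 0 = (1/2 : ℝ) := by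
      show bm_pair 0 2 0 = _
      rw [bm_pair_apply 0 2 0 (by norm_num)]; norm_num
    have e1 : ((U02 : lp (fun _ : ℕ => ℝ) 1)) 2 = (-(1/2) : ℝ) := by
      show bm_pair 0 2 2 = _
      rw [bm_pair_apply 0 2 2 (by norm_num)]; norm_num
    rw [e0] at h0; rw [e1] at h1
    have h := h0.sub h1
    simp only [← mul_sub] at h
    norm_num at h
    exact h
  have hexists : ∀ (c : lp (fun _ : ℕ => ℝ) 1) (d : ℕ → ℝ), ‖c‖ ≤ N1 →
      HasSum (fun n => c n * d n) 1 → ∃ k, 5/6 * N2 < |d k| := by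
    intro c d hc hsum
    by_contra hno
    push_neg at hno
    have habs : Summable fun n => |c n| * (5/6 * N2) := (bm_summable_abs c).mul_right _
    have hsumabs : Summable fun n => |c n| * |d n| := by
      refine Summable.of_nonneg_of_le (fun n => by positivity) (fun n => ?_) habs
      exact mul_le_mul_of_nonneg_left (hno n) (abs_nonneg _)
    have h1 : (1:ℝ) ≤ ∑' n, |c n| * |d n| := by
      have h := norm_tsum_le_tsum_norm (f := fun n => c n * d n)
        (by simpa [Real.norm_eq_abs, abs_mul] using hsumabs)
      rw [hsum.tsum_eq] at h
      simpa [Real.norm_eq_abs, abs_mul] using h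
    have h2 : ∑' n, |c n| * |d n| ≤ ∑' n, |c n| * (5/6 * N2) := by
      refine Summable.tsum_le_tsum (fun n => ?_) hsumabs habs
      exact mul_le_mul_of_nonneg_left (hno n) (abs_nonneg _)
    rw [tsum_mul_right, ← bm_norm_eq c] at h2
    nlinarith [mul_le_mul_of_nonneg_right hc (by positivity : (0:ℝ) ≤ 5/6 * N2), hcon]
  obtain ⟨n, hn⟩ := hexists a (fun k => v k 0 - v k 1) hanorm hA
  obtain ⟨m, hm⟩ := hexists b (fun k => v k 0 - v k 2) hbnorm hB
  have hkn : |v n 0| + |v n 1| + |v n 2| + |v n 0 + v n 1 + v n 2| ≤ N2 :=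
    le_trans (bm_sum_zero_bound (v n) (hvmem n)) (hvnorm n)
  have hn3 := bm_real (v n 0) (v n 1) (v n 2) N2 hkn hn
  have hkm : |v m 0| + |v m 2| + |v m 1| + |v m 0 + v m 2 + v m 1| ≤ N2 := by
    have h := le_trans (bm_sum_zero_bound (v m) (hvmem m)) (hvnorm m)
    have h2 : v m 0 + v m 2 + v m 1 = v m 0 + v m 1 + v m 2 := by ring
    rw [h2]; linarith
  have hm3 := bm_real (v m 0) (v m 2) (v m 1) N2 hkm hm
  have hne : n ≠ m := by
    rintro rfl
    linarith [hn3.2.1, hm3.2.2]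
  have hov := bm_overlap (v n) (v m)
  have hmin : N2/3 < min |v n 0| |v m 0| := lt_min hn3.1 hm3.1
  have hadd : ((F.symm (e n + e m) : ↥(l1zero ℕ)) : lp (fun _ : ℕ => ℝ) 1) = v n + v m := by
    rw [map_add]; push_cast; rfl
  have hsub : ((F.symm (e n - e m) : ↥(l1zero ℕ)) : lp (fun _ : ℕ => ℝ) 1) = v n - v m := by
    rw [map_sub]; push_cast; rfl
  have h2a : 2 ≤ N1 * ‖v n + v m‖ := by
    have h := hlow (e n + e m)
    rw [hadd] at h
    rw [show ‖e n + e m‖ = 2 from bm_norm_single_add n m hne] at h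
    exact h
  have h2b : 2 ≤ N1 * ‖v n - v m‖ := by
    have h := hlow (e n - e m)
    rw [hsub] at h
    rw [show ‖e n - e m‖ = 2 from bm_norm_single_sub n m hne] at h
    exact h
  have ht : ‖v n + v m‖ + ‖v n - v m‖ ≤ 4*N2 - 2*(min |v n 0| |v m 0|) := by
    linarith [hov, hvnorm n, hvnorm m]
  have hp1 := mul_le_mul_of_nonneg_left ht hN1
  have hp2 := mul_le_mul_of_nonneg_left (le_of_lt hmin) hN1
  nlinarith [h2a, h2b, hp1, hp2, hcon]
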